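/- Let ψ and φ be density matrices on a finite-dimensional Hilbert space H (i.e., positive semidefinite operators with trace 1), let n ≥ 2, and define ω = (1/(n−1)) Σ_{k=1}^{n−1} ψ^{⊗k} ⊗ φ^{⊗(n−k)} on H^{⊗n}. Let u be the unitary on H^{⊗(n+1)} cyclically permuting the n+1 tensor factors. Then ‖u(ψ ⊗ ω)u* − φ ⊗ ω‖₁ ≤ 2/(n−1), where ‖·‖₁ is the trace norm. -/

import Mathlib

open Matrix
open scoped ComplexOrder

/-- The trace norm (Schatten 1-norm) of a complex square matrix: `tr √(Mᴴ M)`. -/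
noncomputable def traceNorm {n : Type*} [Fintype n] [DecidableEq n]
    (M : Matrix n n ℂ) : ℝ :=
  (((Matrix.posSemidef_conjTranspose_mul_self M).1.eigenvectorUnitary.1 *
      diagonal (((↑) : ℝ → ℂ) ∘ (√·) ∘ (Matrix.posSemidef_conjTranspose_mul_self M).1.eigenvalues) *
      (star (Matrix.posSemidef_conjTranspose_mul_self M).1.eigenvectorUnitary : Matrix n n ℂ)).trace).re

/-- The `n`-fold tensor product matrix `ψ^{⊗k} ⊗ φ^{⊗(n-k)}` on `H^{⊗n}`,
`H = ℂ^D`, realized on the index set `Fin n → Fin D`. -/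
noncomputable def tensorMix (D n k : ℕ) (ψ φ : Matrix (Fin D) (Fin D) ℂ) :
    Matrix (Fin n → Fin D) (Fin n → Fin D) ℂ :=
  Matrix.of fun x y => ∏ i : Fin n, (if (i : ℕ) < k then ψ (x i) (y i) else φ (x i) (y i))

/-- The catalyst `ω = (1/(n-1)) Σ_{k=1}^{n-1} ψ^{⊗k} ⊗ φ^{⊗(n-k)}`. -/
noncomputable def catalyst (D n : ℕ) (ψ φ : Matrix (Fin D) (Fin D) ℂ) :
    Matrix (Fin n → Fin D) (Fin n → Fin D) ℂ :=
  (1 / ((n : ℂ) - 1)) • ∑ k ∈ Finset.Icc 1 (n - 1), tensorMix D n k ψ φ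

section Aux

variable {m : Type*} [Fintype m] [DecidableEq m]

open scoped MatrixOrder

lemma traceNorm_eq_sqrt (M : Matrix m m ℂ) : traceNorm M = (CFC.sqrt (Mᴴ * M)).trace.re := by
  have hN := Matrix.posSemidef_conjTranspose_mul_self M
  rw [CFC.sqrt_eq_cfc, cfc_nnreal_eq_real _ (Mᴴ * M), hN.1.cfc_eq, traceNorm]
  simp only [IsHermitian.cfc, Unitary.conjStarAlgAut_apply]
  congr 5
  funext x
  simp only [Function.comp_apply, Real.coe_sqrt, Real.coe_toNNReal']
  rw [max_eq_left (hN.eigenvalues_nonneg x)]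
  rfl

lemma trace_re_nonneg_of_psd {Z : Matrix m m ℂ} (hZ : Z.PosSemidef) : 0 ≤ Z.trace.re := by
  have h : ∀ i, 0 ≤ Z i i := fun i => by
    exact hZ.diag_nonneg
  rw [Matrix.trace, Complex.re_sum]
  exact Finset.sum_nonneg fun i _ => (Complex.le_def.mp (h i)).1

lemma trace_mul_re_nonneg_of_psd {X Y : Matrix m m ℂ} (hX : X.PosSemidef)
    (hY : Y.PosSemidef) : 0 ≤ (X * Y).trace.re := by
  have h2 : (X * Y).trace = (CFC.sqrt X * Y * CFC.sqrt X).trace := by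
    conv_lhs => rw [← CFC.sqrt_mul_sqrt_self X hX.nonneg, Matrix.mul_assoc]
    rw [Matrix.trace_mul_comm]
  rw [h2]
  have := (hY.mul_mul_conjTranspose_same (CFC.sqrt X))
  rw [(CFC.sqrt_nonneg X).posSemidef.1.eq] at this
  exact trace_re_nonneg_of_psd this

lemma traceNorm_sub_le_of_psd {A B : Matrix m m ℂ} (hA : A.PosSemidef) (hB : B.PosSemidef) :
    traceNorm (A - B) ≤ A.trace.re + B.trace.re := by
  have hM : (A - B).IsHermitian := hA.1.sub hB.1
  set U : Matrix m m ℂ := (Matrix.IsHermitian.eigenvectorUnitary hM : Matrix m m ℂ) with hUdef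
  set lam := hM.eigenvalues with hlam
  have hU1 : U * star U = 1 := mem_unitaryGroup_iff.mp (Matrix.IsHermitian.eigenvectorUnitary hM).2
  have hU2 : star U * U = 1 := mem_unitaryGroup_iff'.mp (Matrix.IsHermitian.eigenvectorUnitary hM).2
  set C : (m → ℝ) → Matrix m m ℂ :=
    fun f => U * Matrix.diagonal (fun i => (f i : ℂ)) * star U with hC
  have hCmul : ∀ f g : m → ℝ, C f * C g = C (fun i => f i * g i) := by
    intro f g
    simp only [hC, Matrix.mul_assoc]
    rw [← Matrix.mul_assoc (star U) U, hU2, Matrix.one_mul,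
      ← Matrix.mul_assoc (Matrix.diagonal _) (Matrix.diagonal _), Matrix.diagonal_mul_diagonal]
    push_cast
    rfl
  have hCtr : ∀ f : m → ℝ, (C f).trace = ((∑ i, f i : ℝ) : ℂ) := by
    intro f
    rw [hC, Matrix.trace_mul_comm, ← Matrix.mul_assoc, hU2, Matrix.one_mul,
      Matrix.trace_diagonal]
    push_cast
    rfl
  have hCpsd : ∀ f : m → ℝ, (∀ i, 0 ≤ f i) → (C f).PosSemidef := by
    intro f hf
    have hd : (Matrix.diagonal (fun i => (f i : ℂ))).PosSemidef :=
      Matrix.posSemidef_diagonal_iff.mpr fun i => by exact_mod_cast hf i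
    exact hd.mul_mul_conjTranspose_same U
  have hCadd : ∀ f g : m → ℝ, C f + C g = C (fun i => f i + g i) := by
    intro f g
    simp only [hC]
    rw [← Matrix.add_mul, ← Matrix.mul_add, Matrix.diagonal_add]
    push_cast
    rfl
  have hspec : A - B = C lam := by
    exact hM.spectral_theorem
  have hMM : (A - B)ᴴ * (A - B) = C (fun i => lam i * lam i) := by
    rw [hM.eq, hspec, hCmul]
  set S := C (fun i => |lam i|) with hS
  have hSpsd : S.PosSemidef := hCpsd _ fun i => abs_nonneg _
  have hSsq : S ^ 2 = (A - B)ᴴ * (A - B) := by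
    rw [pow_two, hS, hCmul, hMM]
    have h : (fun i => |lam i| * |lam i|) = fun i => lam i * lam i :=
      funext fun i => abs_mul_abs_self _
    rw [h]
  have hsqrt : S = CFC.sqrt ((A - B)ᴴ * (A - B)) := by
    rw [← hSsq, CFC.sqrt_sq S hSpsd.nonneg]
  have hTN : traceNorm (A - B) = ∑ i, |lam i| := by
    rw [traceNorm_eq_sqrt, ← hsqrt, hCtr, Complex.ofReal_re]
  set chi : m → ℝ := fun i => if 0 ≤ lam i then 1 else 0 with hchi
  set P := C chi with hP
  set Q := C (fun i => 1 - chi i) with hQ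
  have hPpsd : P.PosSemidef := hCpsd _ fun i => by
    show (0:ℝ) ≤ if 0 ≤ lam i then 1 else 0
    split <;> norm_num
  have hQpsd : Q.PosSemidef := hCpsd _ fun i => by
    show (0:ℝ) ≤ 1 - if 0 ≤ lam i then 1 else 0
    split <;> norm_num
  have hPQ : P + Q = 1 := by
    rw [hP, hQ, hCadd]
    simp only [add_sub_cancel, hC]
    rw [show (fun i : m => ((1:ℝ) : ℂ)) = fun _ => (1:ℂ) by norm_num,
      Matrix.diagonal_one, Matrix.mul_one, hU1]
  have t₁ : (P * (A - B)).trace.re = ∑ i, chi i * lam i := by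
    rw [hspec, hP, hCmul, hCtr, Complex.ofReal_re]
  have t₂ : (Q * (A - B)).trace.re = ∑ i, (1 - chi i) * lam i := by
    rw [hspec, hQ, hCmul, hCtr, Complex.ofReal_re]
  have splitA : A.trace.re = (P * A).trace.re + (Q * A).trace.re := by
    rw [← Complex.add_re, ← Matrix.trace_add, ← Matrix.add_mul, hPQ, Matrix.one_mul]
  have splitB : B.trace.re = (P * B).trace.re + (Q * B).trace.re := by
    rw [← Complex.add_re, ← Matrix.trace_add, ← Matrix.add_mul, hPQ, Matrix.one_mul]
  have hPM : (P * (A - B)).trace.re = (P * A).trace.re - (P * B).trace.re := by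
    rw [Matrix.mul_sub, Matrix.trace_sub, Complex.sub_re]
  have hQM : (Q * (A - B)).trace.re = (Q * A).trace.re - (Q * B).trace.re := by
    rw [Matrix.mul_sub, Matrix.trace_sub, Complex.sub_re]
  have hPA := trace_mul_re_nonneg_of_psd hPpsd hA
  have hPB := trace_mul_re_nonneg_of_psd hPpsd hB
  have hQA := trace_mul_re_nonneg_of_psd hQpsd hA
  have hQB := trace_mul_re_nonneg_of_psd hQpsd hB
  have habs : ∑ i, |lam i| = (∑ i, chi i * lam i) - ∑ i, (1 - chi i) * lam i := by
    rw [← Finset.sum_sub_distrib]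
    refine Finset.sum_congr rfl fun i _ => ?_
    rw [hchi]
    by_cases h : 0 ≤ lam i
    · simp [h, abs_of_nonneg h]
    · simp [h, abs_of_neg (lt_of_not_ge h)]
  rw [hTN, habs]
  linarith

lemma traceNorm_real_smul (r : ℝ) (hr : 0 ≤ r) (M : Matrix m m ℂ) :
    traceNorm ((r : ℂ) • M) = r * traceNorm M := by
  have hN := Matrix.posSemidef_conjTranspose_mul_self M
  have hstar : star ((r:ℝ) : ℂ) = ((r:ℝ) : ℂ) := by
    simp [Complex.star_def, Complex.conj_ofReal]
  have hSpsd : ((r:ℂ) • CFC.sqrt (Mᴴ * M)).PosSemidef :=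
    (CFC.sqrt_nonneg (Mᴴ * M)).posSemidef.smul (Complex.zero_le_real.mpr hr)
  have hsq : ((r:ℂ) • CFC.sqrt (Mᴴ * M)) ^ 2 = ((r:ℂ) • M)ᴴ * ((r:ℂ) • M) := by
    rw [smul_pow, CFC.sq_sqrt (Mᴴ * M) hN.nonneg, Matrix.conjTranspose_smul, hstar, Matrix.smul_mul,
      Matrix.mul_smul, smul_smul, pow_two]
  have hsqrt : (r:ℂ) • CFC.sqrt (Mᴴ * M) = CFC.sqrt (((r:ℂ) • M)ᴴ * ((r:ℂ) • M)) := by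
    rw [← hsq, CFC.sqrt_sq _ hSpsd.nonneg]
  rw [traceNorm_eq_sqrt, traceNorm_eq_sqrt, ← hsqrt, Matrix.trace_smul, smul_eq_mul, Complex.re_ofReal_mul]

lemma tensor_psd {D N : ℕ} (f : Fin N → Matrix (Fin D) (Fin D) ℂ)
    (hf : ∀ j, (f j).PosSemidef) :
    (Matrix.of fun x y : Fin N → Fin D => ∏ j, f j (x j) (y j)).PosSemidef := by
  choose A hA using fun j => CStarAlgebra.nonneg_iff_eq_star_mul_self.mp (hf j).nonneg
  rw [← Matrix.nonneg_iff_posSemidef, CStarAlgebra.nonneg_iff_eq_star_mul_self]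
  refine ⟨Matrix.of fun a x : Fin N → Fin D => ∏ j, A j (a j) (x j), ?_⟩
  ext x y
  simp only [Matrix.star_eq_conjTranspose, Matrix.mul_apply, Matrix.conjTranspose_apply,
    Matrix.of_apply]
  have h1 : ∀ j, f j (x j) (y j) = ∑ t : Fin D, star (A j t (x j)) * A j t (y j) := by
    intro j
    rw [hA j, Matrix.mul_apply]
    simp [Matrix.star_eq_conjTranspose, Matrix.conjTranspose_apply]
  calc ∏ j, f j (x j) (y j)
      = ∏ j, ∑ t : Fin D, star (A j t (x j)) * A j t (y j) :=
        Finset.prod_congr rfl fun j _ => h1 j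
    _ = ∑ a ∈ Fintype.piFinset (fun _ : Fin N => (Finset.univ : Finset (Fin D))),
          ∏ j, star (A j (a j) (x j)) * A j (a j) (y j) :=
        Finset.prod_univ_sum _ _
    _ = ∑ a : Fin N → Fin D, star (∏ j, A j (a j) (x j)) * ∏ j, A j (a j) (y j) := by
        rw [Fintype.piFinset_univ]
        exact Finset.sum_congr rfl fun a _ => by rw [Finset.prod_mul_distrib, star_prod]

lemma tensor_trace {D N : ℕ} (f : Fin N → Matrix (Fin D) (Fin D) ℂ) :
    (Matrix.of fun x y : Fin N → Fin D => ∏ j, f j (x j) (y j)).trace = ∏ j, (f j).trace := by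
  simp only [Matrix.trace, Matrix.diag_apply, Matrix.of_apply]
  rw [Finset.prod_univ_sum, Fintype.piFinset_univ]

end Aux

/-- The boundary tensor `φ ⊗ ψ^{⊗m} ⊗ φ^{⊗(n-m)}` on `H^{⊗(n+1)}`. -/
noncomputable def bmat (D n m : ℕ) (ψ φ : Matrix (Fin D) (Fin D) ℂ) :
    Matrix (Fin (n + 1) → Fin D) (Fin (n + 1) → Fin D) ℂ :=
  Matrix.of fun x y => ∏ j : Fin (n + 1),
    (if 1 ≤ (j : ℕ) ∧ (j : ℕ) ≤ m then ψ else φ) (x j) (y j)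

theorem stmt5 (D n : ℕ) (hn : 2 ≤ n)
    (ψ φ : Matrix (Fin D) (Fin D) ℂ)
    (hψ : ψ.PosSemidef) (hψtr : ψ.trace = 1)
    (hφ : φ.PosSemidef) (hφtr : φ.trace = 1) :
    traceNorm
      ((Matrix.of fun x y : Fin (n + 1) → Fin D =>
          ψ (x (0 + 1)) (y (0 + 1)) *
            catalyst D n ψ φ (fun i => x (i.succ + 1)) (fun i => y (i.succ + 1))) -
        (Matrix.of fun x y : Fin (n + 1) → Fin D =>
          φ (x 0) (y 0) *
            catalyst D n ψ φ (fun i => x i.succ) (fun i => y i.succ))) ≤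
      2 / ((n : ℝ) - 1) := by
  have hBpsd : ∀ m : ℕ, (bmat D n m ψ φ).PosSemidef := fun m =>
    tensor_psd _ fun j => by split <;> [exact hψ; exact hφ]
  have hBtr : ∀ m : ℕ, (bmat D n m ψ φ).trace = 1 := by
    intro m
    rw [bmat, tensor_trace]
    exact Finset.prod_eq_one fun j _ => by split <;> [exact hψtr; exact hφtr]
  -- per-summand identifications
  have hone : ((0 + 1 : Fin (n + 1)) : ℕ) = 1 := by
    rw [zero_add, Fin.val_one']
    exact Nat.mod_eq_of_lt (by omega)
  have hEk : ∀ k ∈ Finset.Icc 1 (n - 1),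
      (Matrix.of fun x y : Fin (n + 1) → Fin D =>
        ψ (x (0 + 1)) (y (0 + 1)) *
          tensorMix D n k ψ φ (fun i => x (i.succ + 1)) (fun i => y (i.succ + 1)))
      = bmat D n (k + 1) ψ φ := by
    intro k hk
    rw [Finset.mem_Icc] at hk
    ext x y
    simp only [bmat, tensorMix, Matrix.of_apply]
    rw [← Equiv.prod_comp (Equiv.addRight (1 : Fin (n + 1)))
      (fun j => (if 1 ≤ (j : ℕ) ∧ (j : ℕ) ≤ k + 1 then ψ else φ) (x j) (y j)),
      Fin.prod_univ_succ]
    simp only [Equiv.coe_addRight]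
    congr 1
    · have hcond : 1 ≤ ((0 + 1 : Fin (n + 1)) : ℕ) ∧ ((0 + 1 : Fin (n + 1)) : ℕ) ≤ k + 1 := by
        rw [hone]; omega
      exact (congrArg (fun M : Matrix (Fin D) (Fin D) ℂ => M _ _) (if_pos hcond)).symm
    · refine Finset.prod_congr rfl fun i _ => ?_
      have hi := i.isLt
      have hv : ((i.succ + 1 : Fin (n + 1)) : ℕ) = ((i : ℕ) + 2) % (n + 1) := by
        rw [Fin.val_add, Fin.val_succ, Fin.val_one']
        rw [Nat.mod_eq_of_lt (show (1:ℕ) < n + 1 by omega)]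
      by_cases hik : (i : ℕ) < k
      · have hcond : 1 ≤ ((i.succ + 1 : Fin (n + 1)) : ℕ) ∧
            ((i.succ + 1 : Fin (n + 1)) : ℕ) ≤ k + 1 := by
          rw [hv, Nat.mod_eq_of_lt (by omega)]
          omega
        rw [if_pos hik]
        exact (congrArg (fun M : Matrix (Fin D) (Fin D) ℂ => M _ _) (if_pos hcond)).symm
      · have hcond : ¬(1 ≤ ((i.succ + 1 : Fin (n + 1)) : ℕ) ∧
            ((i.succ + 1 : Fin (n + 1)) : ℕ) ≤ k + 1) := by
          rw [hv]
          rcases Nat.lt_or_ge ((i : ℕ) + 2) (n + 1) with h | h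
          · rw [Nat.mod_eq_of_lt h]; omega
          · have h2 : (i : ℕ) + 2 = n + 1 := by omega
            rw [h2, Nat.mod_self]; omega
        rw [if_neg hik]
        exact (congrArg (fun M : Matrix (Fin D) (Fin D) ℂ => M _ _) (if_neg hcond)).symm
  have hFk : ∀ k : ℕ,
      (Matrix.of fun x y : Fin (n + 1) → Fin D =>
        φ (x 0) (y 0) * tensorMix D n k ψ φ (fun i => x i.succ) (fun i => y i.succ))
      = bmat D n k ψ φ := by
    intro k
    ext x y
    simp only [bmat, tensorMix, Matrix.of_apply]
    rw [Fin.prod_univ_succ]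
    have h0 : (if 1 ≤ ((0 : Fin (n + 1)) : ℕ) ∧ ((0 : Fin (n + 1)) : ℕ) ≤ k then ψ else φ)
        (x 0) (y 0) = φ (x 0) (y 0) := by
      rw [if_neg (by simp)]
    rw [h0]
    congr 1
    refine Finset.prod_congr rfl fun i _ => ?_
    by_cases hik : (i : ℕ) < k
    · have hcond : 1 ≤ ((i.succ : Fin (n + 1)) : ℕ) ∧ ((i.succ : Fin (n + 1)) : ℕ) ≤ k := by
        rw [Fin.val_succ]; omega
      rw [if_pos hik, if_pos hcond]
    · have hcond : ¬(1 ≤ ((i.succ : Fin (n + 1)) : ℕ) ∧ ((i.succ : Fin (n + 1)) : ℕ) ≤ k) := by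
        rw [Fin.val_succ]; omega
      rw [if_neg hik, if_neg hcond]
  -- rewrite both matrices as scaled sums of bmat's
  have hM1 : (Matrix.of fun x y : Fin (n + 1) → Fin D =>
        ψ (x (0 + 1)) (y (0 + 1)) *
          catalyst D n ψ φ (fun i => x (i.succ + 1)) (fun i => y (i.succ + 1)))
      = (1 / ((n : ℂ) - 1)) • ∑ k ∈ Finset.Icc 1 (n - 1), bmat D n (k + 1) ψ φ := by
    rw [← Finset.sum_congr rfl hEk]
    ext x y
    simp only [catalyst, Matrix.of_apply, Matrix.smul_apply, Matrix.sum_apply, smul_eq_mul,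
      Finset.mul_sum]
    exact Finset.sum_congr rfl fun k _ => by ring
  have hM2 : (Matrix.of fun x y : Fin (n + 1) → Fin D =>
        φ (x 0) (y 0) * catalyst D n ψ φ (fun i => x i.succ) (fun i => y i.succ))
      = (1 / ((n : ℂ) - 1)) • ∑ k ∈ Finset.Icc 1 (n - 1), bmat D n k ψ φ := by
    rw [← Finset.sum_congr rfl fun k _ => hFk k]
    ext x y
    simp only [catalyst, Matrix.of_apply, Matrix.smul_apply, Matrix.sum_apply, smul_eq_mul,
      Finset.mul_sum]
    exact Finset.sum_congr rfl fun k _ => by ring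
  -- telescoping
  have htel : ∑ k ∈ Finset.Icc 1 (n - 1), (bmat D n (k + 1) ψ φ - bmat D n k ψ φ)
      = bmat D n n ψ φ - bmat D n 1 ψ φ := by
    have hIcc : Finset.Icc 1 (n - 1) = Finset.Ico 1 n := by
      rw [← Finset.Ico_add_one_right_eq_Icc]
      congr 1
      omega
    rw [hIcc, Finset.sum_Ico_eq_sum_range]
    have := Finset.sum_range_sub (fun i => bmat D n (i + 1) ψ φ) (n - 1)
    calc ∑ i ∈ Finset.range (n - 1), (bmat D n (1 + i + 1) ψ φ - bmat D n (1 + i) ψ φ)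
        = ∑ i ∈ Finset.range (n - 1),
            (bmat D n (i + 1 + 1) ψ φ - bmat D n (i + 1) ψ φ) := by
          refine Finset.sum_congr rfl fun i _ => ?_
          rw [Nat.add_comm 1 i]
      _ = bmat D n (n - 1 + 1) ψ φ - bmat D n (0 + 1) ψ φ :=
          Finset.sum_range_sub (fun i => bmat D n (i + 1) ψ φ) (n - 1)
      _ = bmat D n n ψ φ - bmat D n 1 ψ φ := by
          rw [show n - 1 + 1 = n by omega, zero_add]
  rw [hM1, hM2, ← smul_sub, ← Finset.sum_sub_distrib, htel]
  have hr : (0:ℝ) ≤ 1 / ((n : ℝ) - 1) := by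
    have : (2:ℝ) ≤ (n:ℝ) := by exact_mod_cast hn
    apply div_nonneg zero_le_one
    linarith
  have hcast : (1 / ((n : ℂ) - 1)) = ((1 / ((n : ℝ) - 1) : ℝ) : ℂ) := by
    push_cast
    ring
  rw [hcast, traceNorm_real_smul _ hr]
  have hbound := traceNorm_sub_le_of_psd (hBpsd n) (hBpsd 1)
  rw [hBtr n, hBtr 1] at hbound
  norm_num at hbound
  have h2 : (2:ℝ) / ((n:ℝ) - 1) = (1 / ((n:ℝ) - 1)) * 2 := by ring
  rw [h2]
  exact mul_le_mul_of_nonneg_left hbound hr
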